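/- Let σ ∈ (0,1) and c ≥ 0 be real, let K ≥ 1 be an integer, and let (V_k)_{k≥0} be a sequence of nonnegative reals with V_0 = 0 and V_{k+1} ≤ σ·V_k + c/(k+1) for all k ≥ 0. Then for every k ≥ K, V_{k+1} ≤ 2c·(1 + ln K)·σ^{−K}·σ^{⌈k/2⌉}/(1−σ) + 2c/((1−σ)·(k+1)). -/
import Mathlib

open Finset

/-- If `σ ∈ (0,1)`, `c ≥ 0`, `K ≥ 1` is an integer, and `(V_k)` is a nonnegative
real sequence with `V_0 = 0` and `V_{k+1} ≤ σ·V_k + c/(k+1)` for all `k ≥ 0`, then for every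
`k ≥ K`, `V_{k+1} ≤ 2c·(1 + ln K)·σ^(−K)·σ^⌈k/2⌉/(1−σ) + 2c/((1−σ)·(k+1))`. -/
theorem stmt_13 (σ c : ℝ) (hσ0 : 0 < σ) (hσ1 : σ < 1) (hc : 0 ≤ c) (K : ℕ) (hK : 1 ≤ K)
    (V : ℕ → ℝ) (hVnonneg : ∀ k, 0 ≤ V k) (hV0 : V 0 = 0)
    (hrec : ∀ k, V (k + 1) ≤ σ * V k + c / ((k : ℝ) + 1))
    (k : ℕ) (hk : K ≤ k) :
    V (k + 1) ≤ 2 * c * (1 + Real.log K) * (σ ^ K)⁻¹ * σ ^ (⌈(k : ℝ) / 2⌉₊) / (1 - σ)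
      + 2 * c / ((1 - σ) * ((k : ℝ) + 1)) := by
  have hσ0' : (0:ℝ) ≤ σ := hσ0.le
  have h1σ : (0:ℝ) < 1 - σ := by linarith
  have hk1 : 1 ≤ k := le_trans hK hk
  set m := ⌈(k : ℝ) / 2⌉₊ with hm
  -- facts about m
  have hkpos : (0:ℝ) < (k:ℝ) := by exact_mod_cast hk1
  have hmk : m ≤ k := Nat.ceil_le.mpr (by linarith)
  have hk2m : (k:ℝ) ≤ 2 * m := by
    have := Nat.le_ceil ((k:ℝ)/2); rw [← hm] at this; linarith
  have hk2m' : k ≤ 2 * m := by exact_mod_cast hk2m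
  have h2mk : 2 * m ≤ k + 1 := by
    have hq : k ≤ 2 * ((k+1)/2) := by omega
    have hq' : (k:ℝ) ≤ 2 * (((k+1)/2 : ℕ) : ℝ) := by exact_mod_cast hq
    have : m ≤ (k+1)/2 := Nat.ceil_le.mpr (by linarith)
    omega
  have hm1 : 1 ≤ m := by
    rw [hm]; exact Nat.one_le_ceil_iff.mpr (by linarith)
  -- geometric sum bound
  have hgeom : ∀ n : ℕ, ∑ t ∈ range n, σ ^ t ≤ 1 / (1 - σ) := by
    intro n
    rw [geom_sum_eq hσ1.ne, show (σ^n-1)/(σ-1) = (1-σ^n)/(1-σ) by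
      rw [← neg_div_neg_eq]; ring_nf]
    have : (0:ℝ) ≤ σ ^ n := by positivity
    gcongr
    linarith
  -- step 1: unroll the recursion
  have key : ∀ n : ℕ, V (n+1) ≤ ∑ j ∈ range (n+1), σ^(n-j) * (c / ((j:ℝ)+1)) := by
    intro n
    induction n with
    | zero => simpa [hV0] using hrec 0
    | succ n ih =>
      have h := hrec (n+1)
      have hmul : σ * V (n+1) ≤ ∑ j ∈ range (n+1), σ * (σ^(n-j) * (c/((j:ℝ)+1))) := by
        rw [← Finset.mul_sum]
        exact mul_le_mul_of_nonneg_left ih hσ0.le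
      have hcongr : ∑ j ∈ range (n+1), σ * (σ^(n-j) * (c/((j:ℝ)+1)))
          = ∑ j ∈ range (n+1), σ^(n+1-j) * (c/((j:ℝ)+1)) := by
        refine Finset.sum_congr rfl fun j hj => ?_
        have hjn : j ≤ n := Nat.lt_succ_iff.mp (Finset.mem_range.mp hj)
        rw [← mul_assoc, ← pow_succ', show n - j + 1 = n + 1 - j by omega]
      rw [Finset.sum_range_succ, show n + 1 - (n+1) = 0 by omega, pow_zero, one_mul]
      push_cast at h ⊢
      calc V (n+1+1) ≤ σ * V (n+1) + c / ((n:ℝ)+1+1) := by linarith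
        _ ≤ _ := by rw [← hcongr] at *; linarith
  -- the split point K' = min K m
  set K' := min K m with hK'
  have hK'1 : 1 ≤ K' := le_min hK hm1
  have hK'm : K' ≤ m := min_le_right _ _
  have hK'K : K' ≤ K := min_le_left _ _
  -- split the sum
  have hsplit : ∑ j ∈ range (k+1), σ^(k-j) * (c / ((j:ℝ)+1))
      = (∑ j ∈ range K', σ^(k-j) * (c / ((j:ℝ)+1)))
        + (∑ j ∈ Ico K' m, σ^(k-j) * (c / ((j:ℝ)+1)))
        + (∑ j ∈ Ico m (k+1), σ^(k-j) * (c / ((j:ℝ)+1))) := by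
    rw [Finset.range_eq_Ico,
      ← Finset.sum_Ico_consecutive _ (Nat.zero_le m) (by omega : m ≤ k+1),
      ← Finset.sum_Ico_consecutive _ (Nat.zero_le K') hK'm, ← Finset.range_eq_Ico]
  -- Part A1
  have hA1 : (∑ j ∈ range K', σ^(k-j) * (c / ((j:ℝ)+1)))
      ≤ (σ^K)⁻¹ * σ^m * c * (1 + Real.log K) := by
    have step : ∀ j ∈ range K', σ^(k-j) * (c / ((j:ℝ)+1))
        ≤ ((σ^K)⁻¹ * σ^m) * (c / ((j:ℝ)+1)) := by
      intro j hj
      have hjK : j < K' := Finset.mem_range.mp hj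
      have hpow : σ^(k-j) ≤ (σ^K)⁻¹ * σ^m := by
        have h1 : σ^(k-j) * σ^K ≤ σ^m := by
          rw [← pow_add]
          exact pow_le_pow_of_le_one hσ0' hσ1.le (by omega)
        have h2 : σ^(k-j) = σ^(k-j) * σ^K * (σ^K)⁻¹ := by field_simp
        rw [h2]
        calc σ^(k-j) * σ^K * (σ^K)⁻¹ ≤ σ^m * (σ^K)⁻¹ :=
              mul_le_mul_of_nonneg_right h1 (by positivity)
          _ = (σ^K)⁻¹ * σ^m := mul_comm _ _
      exact mul_le_mul_of_nonneg_right hpow (by positivity)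
    calc (∑ j ∈ range K', σ^(k-j) * (c / ((j:ℝ)+1)))
        ≤ ∑ j ∈ range K', ((σ^K)⁻¹ * σ^m) * (c / ((j:ℝ)+1)) := Finset.sum_le_sum step
      _ = ((σ^K)⁻¹ * σ^m * c) * ∑ j ∈ range K', 1/((j:ℝ)+1) := by
          rw [Finset.mul_sum]; refine Finset.sum_congr rfl fun j _ => by ring
      _ ≤ ((σ^K)⁻¹ * σ^m * c) * (1 + Real.log K) := by
          have hh : ∑ j ∈ range K', 1/((j:ℝ)+1) = (harmonic K' : ℝ) := by
            simp [harmonic]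
          have hlog : Real.log K' ≤ Real.log K :=
            Real.log_le_log (by exact_mod_cast hK'1) (by exact_mod_cast hK'K)
          have := harmonic_le_one_add_log K'
          have hnn : (0:ℝ) ≤ (σ^K)⁻¹ * σ^m * c := by positivity
          refine mul_le_mul_of_nonneg_left ?_ hnn
          rw [hh]; linarith
  -- Part A2
  have hA2 : (∑ j ∈ Ico K' m, σ^(k-j) * (c / ((j:ℝ)+1))) ≤ c * σ^m * (1/(1-σ)) := by
    have step : ∀ j ∈ Ico K' m, σ^(k-j) * (c / ((j:ℝ)+1))
        ≤ (c * σ^m) * σ^(m-1-j) := by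
      intro j hj
      have hjm : j < m := (Finset.mem_Ico.mp hj).2
      have hpow : σ^(k-j) ≤ σ^m * σ^(m-1-j) := by
        rw [← pow_add]
        exact pow_le_pow_of_le_one hσ0' hσ1.le (by omega)
      have hcd : c / ((j:ℝ)+1) ≤ c := by
        rw [div_le_iff₀ (by positivity)]
        nlinarith [Nat.cast_nonneg (α := ℝ) j]
      calc σ^(k-j) * (c / ((j:ℝ)+1)) ≤ (σ^m * σ^(m-1-j)) * c := by
            apply mul_le_mul hpow hcd (by positivity) (by positivity)
        _ = (c * σ^m) * σ^(m-1-j) := by ring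
    calc (∑ j ∈ Ico K' m, σ^(k-j) * (c / ((j:ℝ)+1)))
        ≤ ∑ j ∈ Ico K' m, (c * σ^m) * σ^(m-1-j) := Finset.sum_le_sum step
      _ ≤ ∑ j ∈ range m, (c * σ^m) * σ^(m-1-j) := by
          refine Finset.sum_le_sum_of_subset_of_nonneg ?_ (fun j _ _ => by positivity)
          rw [Finset.range_eq_Ico]; exact Finset.Ico_subset_Ico (Nat.zero_le _) le_rfl
      _ = (c * σ^m) * ∑ j ∈ range m, σ^(m-1-j) := by rw [Finset.mul_sum]
      _ = (c * σ^m) * ∑ j ∈ range m, σ^j := by rw [Finset.sum_range_reflect (fun j => σ^j) m]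
      _ ≤ (c * σ^m) * (1/(1-σ)) := by
          exact mul_le_mul_of_nonneg_left (hgeom m) (by positivity)
      _ = c * σ^m * (1/(1-σ)) := by ring
  -- Part B
  have hB : (∑ j ∈ Ico m (k+1), σ^(k-j) * (c / ((j:ℝ)+1)))
      ≤ 2 * c / ((1 - σ) * ((k:ℝ)+1)) := by
    have step : ∀ j ∈ Ico m (k+1), σ^(k-j) * (c / ((j:ℝ)+1))
        ≤ (2*c/((k:ℝ)+1)) * σ^(k-j) := by
      intro j hj
      have hjm : m ≤ j := (Finset.mem_Ico.mp hj).1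
      have hjm' : (m:ℝ) ≤ (j:ℝ) := by exact_mod_cast hjm
      have hcd : c / ((j:ℝ)+1) ≤ 2*c/((k:ℝ)+1) := by
        rw [div_le_div_iff₀ (by positivity) (by positivity)]
        nlinarith
      calc σ^(k-j) * (c / ((j:ℝ)+1)) ≤ σ^(k-j) * (2*c/((k:ℝ)+1)) :=
            mul_le_mul_of_nonneg_left hcd (by positivity)
        _ = (2*c/((k:ℝ)+1)) * σ^(k-j) := by ring
    calc (∑ j ∈ Ico m (k+1), σ^(k-j) * (c / ((j:ℝ)+1)))
        ≤ ∑ j ∈ Ico m (k+1), (2*c/((k:ℝ)+1)) * σ^(k-j) := Finset.sum_le_sum step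
      _ = (2*c/((k:ℝ)+1)) * ∑ j ∈ Ico m (k+1), σ^(k-j) := by rw [Finset.mul_sum]
      _ = (2*c/((k:ℝ)+1)) * ∑ t ∈ range (k+1-m), σ^(k-(m+t)) := by
          rw [Finset.sum_Ico_eq_sum_range]
      _ = (2*c/((k:ℝ)+1)) * ∑ t ∈ range (k+1-m), σ^(k-m-t) := by
          congr 1; exact Finset.sum_congr rfl fun t ht => by
            rw [show k - (m+t) = k - m - t by omega]
      _ = (2*c/((k:ℝ)+1)) * ∑ t ∈ range (k+1-m), σ^t := by
          congr 1
          have := Finset.sum_range_reflect (fun t => σ^t) (k+1-m)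
          simp only [show ∀ t, k+1-m-1-t = k-m-t from fun t => by omega] at this
          exact this
      _ ≤ (2*c/((k:ℝ)+1)) * (1/(1-σ)) :=
          mul_le_mul_of_nonneg_left (hgeom _) (by positivity)
      _ = 2 * c / ((1 - σ) * ((k:ℝ)+1)) := by
          rw [div_mul_div_comm, mul_one, mul_comm ((k:ℝ)+1)]
  -- combine
  have hln : (0:ℝ) ≤ Real.log K := Real.log_nonneg (by exact_mod_cast hK)
  have hinv : (1:ℝ) ≤ (σ^K)⁻¹ := (one_le_inv₀ (by positivity)).mpr (pow_le_one₀ hσ0' hσ1.le)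
  have hpm : (0:ℝ) ≤ σ^m := by positivity
  have hL1 : (1:ℝ) ≤ 1 + Real.log K := by linarith
  have hfinal : (σ^K)⁻¹ * σ^m * c * (1 + Real.log K) + c * σ^m * (1/(1-σ))
      ≤ 2 * c * (1 + Real.log K) * (σ^K)⁻¹ * σ^m / (1 - σ) := by
    have hX : (0:ℝ) ≤ c * (1 + Real.log K) * (σ^K)⁻¹ * σ^m := by positivity
    have hLI : (1:ℝ) ≤ (1 + Real.log K) * (σ^K)⁻¹ := by
      calc (1:ℝ) ≤ (σ^K)⁻¹ := hinv
        _ = 1 * (σ^K)⁻¹ := (one_mul _).symm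
        _ ≤ (1 + Real.log K) * (σ^K)⁻¹ := mul_le_mul_of_nonneg_right hL1 (by positivity)
    have t1 : (σ^K)⁻¹ * σ^m * c * (1 + Real.log K)
        ≤ c * (1 + Real.log K) * (σ^K)⁻¹ * σ^m / (1-σ) := by
      rw [le_div_iff₀ h1σ]
      have heq1 : (σ^K)⁻¹ * σ^m * c * (1 + Real.log K) * (1-σ)
          = (c * (1 + Real.log K) * (σ^K)⁻¹ * σ^m) * (1-σ) := by ring
      rw [heq1]
      simpa using mul_le_mul_of_nonneg_left (show (1:ℝ)-σ ≤ 1 by linarith) hX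
    have t2 : c * σ^m * (1/(1-σ)) ≤ c * (1 + Real.log K) * (σ^K)⁻¹ * σ^m / (1-σ) := by
      rw [mul_one_div]
      have hnum : c * σ^m ≤ c * (1 + Real.log K) * (σ^K)⁻¹ * σ^m := by
        calc c * σ^m = (1 * c) * σ^m := by ring
          _ ≤ (((1 + Real.log K) * (σ^K)⁻¹) * c) * σ^m := by
              exact mul_le_mul_of_nonneg_right
                (mul_le_mul_of_nonneg_right hLI hc) hpm
          _ = c * (1 + Real.log K) * (σ^K)⁻¹ * σ^m := by ring
      exact (div_le_div_iff_of_pos_right h1σ).mpr hnum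
    have heq : 2 * c * (1 + Real.log K) * (σ^K)⁻¹ * σ^m / (1 - σ)
        = 2 * (c * (1 + Real.log K) * (σ^K)⁻¹ * σ^m / (1-σ)) := by ring
    linarith
  calc V (k+1) ≤ _ := key k
    _ = _ := hsplit
    _ ≤ _ := by linarith
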